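/- Let B be a slim double groupoid satisfying the filling condition, and let J be the subgroupoid of the free product V * H generated by the elements [A] = x g y⁻¹ h⁻¹ for all boxes A ∈ B with top x, right g, bottom y, left h. Then J is a normal subgroup bundle of V * H: for every generator [A] and every arrow u of V * H with target the bottom-left vertex of A, the conjugate u[A]u⁻¹ lies in J. -/

import Mathlib

/-- A groupoid over a base `Pt`, given concretely by a set of arrows with source and
target maps, identities, a (total, but only meaningful on composable pairs)
composition written in diagrammatic order (`comp g h` is "`g` then `h`",
defined when `e g = s h`), and inverses. -/
structure PreGroupoid (Pt : Type) (Arr : Type) where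
  s : Arr → Pt
  e : Arr → Pt
  id : Pt → Arr
  comp : Arr → Arr → Arr
  inv : Arr → Arr
  s_id : ∀ p, s (id p) = p
  e_id : ∀ p, e (id p) = p
  s_comp : ∀ g h, e g = s h → s (comp g h) = s g
  e_comp : ∀ g h, e g = s h → e (comp g h) = e h
  id_comp : ∀ g, comp (id (s g)) g = g
  comp_id : ∀ g, comp g (id (e g)) = g
  assoc : ∀ g h k, e g = s h → e h = s k → comp (comp g h) k = comp g (comp h k)
  s_inv : ∀ g, s (inv g) = e g
  e_inv : ∀ g, e (inv g) = s g
  comp_inv : ∀ g, comp g (inv g) = id (s g)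
  inv_comp : ∀ g, comp (inv g) g = id (e g)

/-- An action of a groupoid `G` over `Pt` on a fiber bundle `p : E → Pt`:
`act g x` is meaningful when `G.e g = p x`, lands in the fiber over `G.s g`,
is compatible with composition (`(gh) ▷ x = g ▷ (h ▷ x)`) and identities act
trivially. -/
structure GroupoidAction {Pt Arr E : Type} (G : PreGroupoid Pt Arr) (p : E → Pt) where
  act : Arr → E → E
  p_act : ∀ g x, G.e g = p x → p (act g x) = G.s g
  act_id : ∀ x, act (G.id (p x)) x = x
  act_comp : ∀ g h x, G.e g = G.s h → G.e h = p x →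
    act (G.comp g h) x = act g (act h x)

/-! ### The free product of two groupoids over a common base, via reduced words.
Letters are arrows of the disjoint union quiver `V ⊔ H`; a path is either a base
point (`Sum.inl p`) or a nonempty composable list of letters (`Sum.inr l`).  The
reduction operations (removing identity letters, collapsing a single identity
letter to its base point, and multiplying adjacent letters lying in the same
factor groupoid) generate an equivalence relation whose classes are the elements
of the free product `V * H`. -/

/-- A letter: an arrow of `V` (`inl`) or of `H` (`inr`). -/
abbrev Letter (Av Ah : Type) := Av ⊕ Ah

variable {Pt Av Ah : Type}

def lsrc (GV : PreGroupoid Pt Av) (GH : PreGroupoid Pt Ah) : Letter Av Ah → Pt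
  | .inl g => GV.s g
  | .inr x => GH.s x

def ltgt (GV : PreGroupoid Pt Av) (GH : PreGroupoid Pt Ah) : Letter Av Ah → Pt
  | .inl g => GV.e g
  | .inr x => GH.e x

/-- The letter is an identity arrow of its factor groupoid. -/
def lIsId (GV : PreGroupoid Pt Av) (GH : PreGroupoid Pt Ah) : Letter Av Ah → Prop
  | .inl g => ∃ p, g = GV.id p
  | .inr x => ∃ p, x = GH.id p

/-- Which factor groupoid the letter belongs to. -/
def lFac : Letter Av Ah → Bool
  | .inl _ => true
  | .inr _ => false

/-- The inverse of a letter, taken in its factor groupoid. -/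
def linv (GV : PreGroupoid Pt Av) (GH : PreGroupoid Pt Ah) : Letter Av Ah → Letter Av Ah
  | .inl g => .inl (GV.inv g)
  | .inr x => .inr (GH.inv x)

/-- One-step reduction of paths in the quiver `V ⊔ H`. -/
inductive Red (GV : PreGroupoid Pt Av) (GH : PreGroupoid Pt Ah) :
    (Pt ⊕ List (Letter Av Ah)) → (Pt ⊕ List (Letter Av Ah)) → Prop
  | remove_id (l₁ l₂ : List (Letter Av Ah)) (u : Letter Av Ah) :
      lIsId GV GH u → l₁ ++ l₂ ≠ [] →
      Red GV GH (.inr (l₁ ++ u :: l₂)) (.inr (l₁ ++ l₂))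
  | single_id (u : Letter Av Ah) (p : Pt) :
      lIsId GV GH u → lsrc GV GH u = p →
      Red GV GH (.inr [u]) (.inl p)
  | merge_v (l₁ l₂ : List (Letter Av Ah)) (g g' : Av) :
      GV.e g = GV.s g' →
      Red GV GH (.inr (l₁ ++ .inl g :: .inl g' :: l₂))
        (.inr (l₁ ++ .inl (GV.comp g g') :: l₂))
  | merge_h (l₁ l₂ : List (Letter Av Ah)) (x x' : Ah) :
      GH.e x = GH.s x' →
      Red GV GH (.inr (l₁ ++ .inr x :: .inr x' :: l₂))
        (.inr (l₁ ++ .inr (GH.comp x x') :: l₂))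

/-- Consecutive letters alternate between the two factor groupoids. -/
def Alternating : List (Letter Av Ah) → Prop :=
  List.Chain' (fun a b => lFac a ≠ lFac b)

/-- Consecutive letters are composable (target of one = source of the next). -/
def Composable (GV : PreGroupoid Pt Av) (GH : PreGroupoid Pt Ah) :
    List (Letter Av Ah) → Prop :=
  List.Chain' (fun a b => ltgt GV GH a = lsrc GV GH b)

/-- Reduced path: a base point, or a nonempty composable word with no identity
letters in which consecutive letters lie in different factors. -/
def ReducedW (GV : PreGroupoid Pt Av) (GH : PreGroupoid Pt Ah) :
    (Pt ⊕ List (Letter Av Ah)) → Prop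
  | .inl _ => True
  | .inr l => l ≠ [] ∧ Composable GV GH l ∧ (∀ u ∈ l, ¬ lIsId GV GH u) ∧ Alternating l

/-- Length of a path (a base point has length 0). -/
def wlen : (Pt ⊕ List (Letter Av Ah)) → ℕ
  | .inl _ => 0
  | .inr l => l.length

/-! ### Double groupoids.
A double groupoid with base `Pt`, boxes `Bx`, horizontal edges `Hh` and vertical
edges `Vv`: `hor` and `ver` are the edge groupoids over `Pt` (for a horizontal
edge `x`, `hor.s x` / `hor.e x` are its left / right endpoints; for a vertical
edge `g`, `ver.s g` / `ver.e g` are its top / bottom endpoints); `bh` is the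
horizontal composition groupoid of boxes over `Vv` (source = left edge, target =
right edge) and `bv` the vertical composition groupoid of boxes over `Hh`
(source = top edge, target = bottom edge), subject to compatibility of the edge
maps with the compositions and identities, and the interchange law. -/
structure DoubleGroupoid (Pt Bx Hh Vv : Type) where
  hor : PreGroupoid Pt Hh
  ver : PreGroupoid Pt Vv
  bh : PreGroupoid Vv Bx
  bv : PreGroupoid Hh Bx
  match_tl : ∀ A, hor.s (bv.s A) = ver.s (bh.s A)
  match_tr : ∀ A, hor.e (bv.s A) = ver.s (bh.e A)
  match_bl : ∀ A, hor.s (bv.e A) = ver.e (bh.s A)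
  match_br : ∀ A, hor.e (bv.e A) = ver.e (bh.e A)
  t_hcomp : ∀ A C, bh.e A = bh.s C → bv.s (bh.comp A C) = hor.comp (bv.s A) (bv.s C)
  b_hcomp : ∀ A C, bh.e A = bh.s C → bv.e (bh.comp A C) = hor.comp (bv.e A) (bv.e C)
  l_vcomp : ∀ A C, bv.e A = bv.s C → bh.s (bv.comp A C) = ver.comp (bh.s A) (bh.s C)
  r_vcomp : ∀ A C, bv.e A = bv.s C → bh.e (bv.comp A C) = ver.comp (bh.e A) (bh.e C)
  t_idh : ∀ g, bv.s (bh.id g) = hor.id (ver.s g)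
  b_idh : ∀ g, bv.e (bh.id g) = hor.id (ver.e g)
  l_idv : ∀ x, bh.s (bv.id x) = ver.id (hor.s x)
  r_idv : ∀ x, bh.e (bv.id x) = ver.id (hor.e x)
  idh_vcomp : ∀ g g', ver.e g = ver.s g' →
    bv.comp (bh.id g) (bh.id g') = bh.id (ver.comp g g')
  idv_hcomp : ∀ x y, hor.e x = hor.s y →
    bh.comp (bv.id x) (bv.id y) = bv.id (hor.comp x y)
  theta_eq : ∀ p, bh.id (ver.id p) = bv.id (hor.id p)
  interchange : ∀ A C A' C', bh.e A = bh.s C → bh.e A' = bh.s C' →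
    bv.e A = bv.s A' → bv.e C = bv.s C' →
    bv.comp (bh.comp A C) (bh.comp A' C') = bh.comp (bv.comp A A') (bv.comp C C')

namespace DoubleGroupoid

variable {Pt Bx Hh Vv : Type} (D : DoubleGroupoid Pt Bx Hh Vv)

/-- Top edge of a box. -/
def top (A : Bx) : Hh := D.bv.s A
/-- Bottom edge of a box. -/
def bot (A : Bx) : Hh := D.bv.e A
/-- Left edge of a box. -/
def lft (A : Bx) : Vv := D.bh.s A
/-- Right edge of a box. -/
def rgt (A : Bx) : Vv := D.bh.e A
/-- Top-left vertex of a box. -/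
def tlv (A : Bx) : Pt := D.ver.s (D.bh.s A)
/-- Bottom-left vertex of a box. -/
def blv (A : Bx) : Pt := D.ver.e (D.bh.s A)
/-- Bottom-right vertex of a box. -/
def brv (A : Bx) : Pt := D.ver.e (D.bh.e A)
/-- The doubly degenerate box `Θ_p` at a point. -/
def theta (p : Pt) : Bx := D.bh.id (D.ver.id p)
/-- The core groupoid: boxes whose top and right edges are identities.  (Its source
and target maps are the bottom-left and bottom-right vertices.) -/
def core : Set Bx :=
  {E | (∃ p, D.bv.s E = D.hor.id p) ∧ (∃ q, D.bh.e E = D.ver.id q)}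
/-- The action of the core groupoid on boxes:
`E ⇀ A = {(id l(A), A) over (E, id b(A))}`; since `id l(A) ⬝ A = A`, this is the
vertical composite of `A` over `E ⬝ id b(A)`.  It is meaningful when
`br(E) = bl(A)`.  For `E, M` in the core, `coreAct E M` is also the core
composition `E ∘ M`. -/
def coreAct (E A : Bx) : Bx :=
  D.bv.comp A (D.bh.comp E (D.bv.id (D.bv.e A)))
/-- The associated bundle `K`: boxes all of whose edges are identities. -/
def kBundle : Set Bx :=
  {K | (∃ p, D.bv.s K = D.hor.id p) ∧ (∃ p, D.bv.e K = D.hor.id p) ∧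
       (∃ p, D.bh.s K = D.ver.id p) ∧ (∃ p, D.bh.e K = D.ver.id p)}

end DoubleGroupoid

variable {Pt Bx Hh Vv : Type}

/-- The bracket word `[A] = x g y⁻¹ h⁻¹` associated to a box `A` (top `x`, right
`g`, bottom `y`, left `h`), a loop of the free product `V * H` based at the
top-left vertex of `A`. -/
def brktWord (D : DoubleGroupoid Pt Bx Hh Vv) (A : Bx) : List (Letter Vv Hh) :=
  [.inr (D.bv.s A), .inl (D.bh.e A),
   .inr (D.hor.inv (D.bv.e A)), .inl (D.ver.inv (D.bh.s A))]

/-- The word of a signed bracket `[A]^{±1}`. -/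
def sbrktWord (D : DoubleGroupoid Pt Bx Hh Vv) (z : Bx × Bool) : List (Letter Vv Hh) :=
  if z.2 then brktWord D z.1
  else ((brktWord D z.1).map (linv D.ver D.hor)).reverse

/-- The path of the free product represented by a list of letters based at `p`
(the empty list represents the identity `[p]`). -/
def mkW (p : Pt) (l : List (Letter Vv Hh)) : Pt ⊕ List (Letter Vv Hh) :=
  match l with
  | [] => .inl p
  | l => .inr l

/-- Membership in the subgroupoid `J` of `V * H` generated by the bracket
relations: the path `ω` represents an element of the fiber `J(p)` iff it is
equivalent in `V * H` to a product of signed brackets `[A₁]^{ε₁} ⋯ [Aₙ]^{εₙ}` of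
boxes whose top-left vertex is `p`. -/
def InJ (D : DoubleGroupoid Pt Bx Hh Vv) (p : Pt)
    (ω : Pt ⊕ List (Letter Vv Hh)) : Prop :=
  ∃ L : List (Bx × Bool),
    (∀ z ∈ L, D.ver.s (D.bh.s z.1) = p) ∧
    Relation.EqvGen (Red D.ver D.hor) ω
      (mkW p (L.flatMap (sbrktWord D)))

section PGLemmas
variable {Pt Arr : Type} (G : PreGroupoid Pt Arr)

theorem PreGroupoid.inv_unique {g h : Arr} (hc : G.e g = G.s h)
    (hid : G.comp g h = G.id (G.s g)) : h = G.inv g := by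
  have h1 : G.comp (G.inv g) (G.comp g h) = G.comp (G.comp (G.inv g) g) h :=
    (G.assoc _ _ _ (G.e_inv g) hc).symm
  rw [hid, G.inv_comp] at h1
  have h2 : G.comp (G.inv g) (G.id (G.s g)) = G.inv g := by
    have := G.comp_id (G.inv g); rwa [G.e_inv] at this
  rw [h2] at h1
  have h3 : G.comp (G.id (G.e g)) h = h := by
    have := G.id_comp h; rwa [← hc] at this
  rw [h3] at h1; exact h1.symm

theorem PreGroupoid.inv_inv (g : Arr) : G.inv (G.inv g) = g := by
  have := (G.inv_unique (g := G.inv g) (h := g) (G.e_inv g) ?_).symm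
  · exact this
  · rw [G.inv_comp, G.s_inv]

theorem PreGroupoid.inv_id (p : Pt) : G.inv (G.id p) = G.id p := by
  have := G.inv_unique (g := G.id p) (h := G.id p) (by rw [G.e_id, G.s_id]) ?_
  · exact this.symm
  · have := G.id_comp (G.id p); rw [G.s_id] at this ⊢; exact this

theorem PreGroupoid.inv_comp_eq {g h : Arr} (hc : G.e g = G.s h) :
    G.inv (G.comp g h) = G.comp (G.inv h) (G.inv g) := by
  refine (G.inv_unique (by
    rw [G.e_comp _ _ hc, G.s_comp _ _ (by rw [G.e_inv, G.s_inv]; exact hc.symm), G.s_inv]) ?_).symm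
  have e1 : G.comp (G.comp g h) (G.comp (G.inv h) (G.inv g))
      = G.comp g (G.comp (G.comp h (G.inv h)) (G.inv g)) := by
    rw [G.assoc g h _ hc
        (by rw [G.s_comp _ _ (by rw [G.e_inv, G.s_inv]; exact hc.symm), G.s_inv]),
      G.assoc h (G.inv h) (G.inv g) (by rw [G.s_inv])
        (by rw [G.e_inv, G.s_inv]; exact hc.symm)]
  rw [e1, G.comp_inv h]
  have e2 : G.comp (G.id (G.s h)) (G.inv g) = G.inv g := by
    have := G.id_comp (G.inv g); rwa [G.s_inv, hc] at this
  rw [e2, G.comp_inv, G.s_comp _ _ hc]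

theorem PreGroupoid.inv_cancel_left {g h : Arr} (hc : G.e g = G.s h) :
    G.comp (G.inv g) (G.comp g h) = h := by
  rw [← G.assoc _ _ _ (G.e_inv g) hc, G.inv_comp, hc]
  exact G.id_comp h

theorem PreGroupoid.inv_comp_cancel {g h : Arr} (hc : G.e g = G.s h) :
    G.comp (G.inv (G.comp g h)) g = G.inv h := by
  rw [G.inv_comp_eq hc,
    G.assoc _ _ _ (by rw [G.e_inv, G.s_inv]; exact hc.symm) (G.e_inv g),
    G.inv_comp g, hc]
  have := G.comp_id (G.inv h); rwa [G.e_inv] at this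
end PGLemmas

section DGLemmas
variable {Pt Bx Hh Vv : Type} (D : DoubleGroupoid Pt Bx Hh Vv)

theorem DoubleGroupoid.bve_bhinv (X : Bx) :
    D.bv.e (D.bh.inv X) = D.hor.inv (D.bv.e X) := by
  have hc : D.bh.e X = D.bh.s (D.bh.inv X) := (D.bh.s_inv X).symm
  have h1 : D.hor.comp (D.bv.e X) (D.bv.e (D.bh.inv X))
      = D.bv.e (D.bh.comp X (D.bh.inv X)) := (D.b_hcomp _ _ hc).symm
  rw [D.bh.comp_inv, D.b_idh, ← D.match_bl] at h1
  exact D.hor.inv_unique (by rw [D.match_br, hc, ← D.match_bl]) h1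

theorem DoubleGroupoid.bhe_bvinv (X : Bx) :
    D.bh.e (D.bv.inv X) = D.ver.inv (D.bh.e X) := by
  have hc : D.bv.e X = D.bv.s (D.bv.inv X) := (D.bv.s_inv X).symm
  have h1 : D.ver.comp (D.bh.e X) (D.bh.e (D.bv.inv X))
      = D.bh.e (D.bv.comp X (D.bv.inv X)) := (D.r_vcomp _ _ hc).symm
  rw [D.bv.comp_inv, D.r_idv, D.match_tr] at h1
  exact D.ver.inv_unique (by rw [← D.match_br, hc, D.match_tr]) h1
end DGLemmas
section WordLemmas
variable {Pt Av Ah : Type} {GV : PreGroupoid Pt Av} {GH : PreGroupoid Pt Ah}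

/-- Underlying letter list of a path (a base point yields the empty list). -/
def toL : Pt ⊕ List (Letter Av Ah) → List (Letter Av Ah)
  | .inl _ => []
  | .inr l => l

@[simp] theorem toL_inr (l : List (Letter Av Ah)) :
    toL (Pt := Pt) (.inr l) = l := rfl

@[simp] theorem toL_inl (p : Pt) : toL (Av := Av) (Ah := Ah) (.inl p) = [] := rfl

@[simp] theorem toL_mkW (p : Pt) (l : List (Letter Av Ah)) : toL (mkW p l) = l := by
  cases l <;> rfl

theorem red_context (a b : List (Letter Av Ah)) (hab : a ++ b ≠ [])
    {ω ω' : Pt ⊕ List (Letter Av Ah)} (h : Red GV GH ω ω') :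
    Red GV GH (.inr (a ++ toL ω ++ b)) (.inr (a ++ toL ω' ++ b)) := by
  cases h with
  | remove_id l₁ l₂ u hu _ =>
      have := Red.remove_id (GV := GV) (GH := GH) (a ++ l₁) (l₂ ++ b) u hu
        (by simp only [ne_eq, List.append_eq_nil_iff] at hab ⊢; tauto)
      simpa [toL, List.append_assoc] using this
  | single_id u p hu hp =>
      have := Red.remove_id (GV := GV) (GH := GH) a b u hu hab
      simpa [toL, List.append_assoc] using this
  | merge_v l₁ l₂ g g' hc =>
      have := Red.merge_v (GV := GV) (GH := GH) (a ++ l₁) (l₂ ++ b) g g' hc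
      simpa [toL, List.append_assoc] using this
  | merge_h l₁ l₂ x x' hc =>
      have := Red.merge_h (GV := GV) (GH := GH) (a ++ l₁) (l₂ ++ b) x x' hc
      simpa [toL, List.append_assoc] using this

theorem eqv_context (a b : List (Letter Av Ah)) (hab : a ++ b ≠ [])
    {ω ω' : Pt ⊕ List (Letter Av Ah)} (h : Relation.EqvGen (Red GV GH) ω ω') :
    Relation.EqvGen (Red GV GH) (.inr (a ++ toL ω ++ b)) (.inr (a ++ toL ω' ++ b)) := by
  induction h with
  | rel _ _ h => exact .rel _ _ (red_context a b hab h)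
  | refl _ => exact .refl _
  | symm _ _ _ ih => exact .symm _ _ ih
  | trans _ _ _ _ _ ih1 ih2 => exact .trans _ _ _ ih1 ih2

theorem eqv_merge_v (l₁ l₂ : List (Letter Av Ah)) (g g' k : Av)
    (hc : GV.e g = GV.s g') (hk : GV.comp g g' = k) :
    Relation.EqvGen (Red GV GH) (.inr (l₁ ++ .inl g :: .inl g' :: l₂))
      (.inr (l₁ ++ .inl k :: l₂)) := by
  subst hk; exact .rel _ _ (Red.merge_v l₁ l₂ g g' hc)

theorem eqv_merge_h (l₁ l₂ : List (Letter Av Ah)) (x x' k : Ah)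
    (hc : GH.e x = GH.s x') (hk : GH.comp x x' = k) :
    Relation.EqvGen (Red GV GH) (.inr (l₁ ++ .inr x :: .inr x' :: l₂))
      (.inr (l₁ ++ .inr k :: l₂)) := by
  subst hk; exact .rel _ _ (Red.merge_h l₁ l₂ x x' hc)

theorem eqv_remove (l₁ l₂ : List (Letter Av Ah)) (u : Letter Av Ah)
    (hu : lIsId GV GH u) (hne : l₁ ++ l₂ ≠ []) :
    Relation.EqvGen (Red GV GH) (.inr (l₁ ++ u :: l₂)) (.inr (l₁ ++ l₂)) :=
  .rel _ _ (Red.remove_id l₁ l₂ u hu hne)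

theorem eqv_append {p : Pt} {a b la : List (Letter Av Ah)} (lb : List (Letter Av Ah))
    (hb : b ≠ []) (hla : la ≠ [])
    (h₁ : Relation.EqvGen (Red GV GH) (.inr a) (.inr la))
    (h₂ : Relation.EqvGen (Red GV GH) (.inr b) (mkW p lb)) :
    Relation.EqvGen (Red GV GH) (.inr (a ++ b)) (mkW p (la ++ lb)) := by
  have e1 : Relation.EqvGen (Red GV GH) (.inr ([] ++ a ++ b)) (.inr ([] ++ la ++ b)) := by
    have := eqv_context (GV := GV) (GH := GH) [] b (by simpa using hb) h₁
    simpa only [toL_inr] using this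
  have e2 : Relation.EqvGen (Red GV GH) (.inr (la ++ b ++ [])) (.inr (la ++ lb ++ [])) := by
    have := eqv_context (GV := GV) (GH := GH) la [] (by simpa using hla) h₂
    simpa only [toL_inr, toL_mkW] using this
  have e3 : mkW p (la ++ lb) = .inr (la ++ lb) := by
    cases la with
    | nil => exact absurd rfl hla
    | cons x l => rfl
  rw [e3]
  simp only [List.nil_append, List.append_nil] at e1 e2
  exact .trans _ _ _ e1 e2

end WordLemmas
theorem conj_single {Pt Bx Hh Vv : Type} (D : DoubleGroupoid Pt Bx Hh Vv)
    (hfill : ∀ (x : Hh) (g : Vv), D.hor.e x = D.ver.s g →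
      ∃ A : Bx, D.bv.s A = x ∧ D.bh.e A = g)
    (A : Bx) (ε : Bool) (z : Letter Vv Hh)
    (hz : ltgt D.ver D.hor z = D.ver.s (D.bh.s A)) :
    ∃ L : List (Bx × Bool), L.flatMap (sbrktWord D) ≠ [] ∧
      (∀ b ∈ L, D.ver.s (D.bh.s b.1) = lsrc D.ver D.hor z) ∧
      Relation.EqvGen (Red D.ver D.hor)
        (.inr (z :: sbrktWord D (A, ε) ++ [linv D.ver D.hor z]))
        (.inr (L.flatMap (sbrktWord D))) := by
  cases z with
  | inr x =>
    simp only [ltgt] at hz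
    obtain ⟨F, hF1, hF2⟩ := hfill x (D.bh.s A) hz
    have cxA : D.hor.e x = D.hor.s (D.bv.s A) := by rw [hz, ← D.match_tl]
    have cyF : D.hor.e (D.bv.e F) = D.hor.s (D.bv.e A) := by
      rw [D.match_br, hF2, ← D.match_bl]
    have baseF : D.ver.s (D.bh.s F) = D.hor.s x := by rw [← D.match_tl, hF1]
    have topC : D.bv.s (D.bh.comp F A) = D.hor.comp x (D.bv.s A) := by
      rw [D.t_hcomp F A hF2, hF1]
    have botC : D.bv.e (D.bh.comp F A) = D.hor.comp (D.bv.e F) (D.bv.e A) :=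
      D.b_hcomp F A hF2
    have lftC : D.bh.s (D.bh.comp F A) = D.bh.s F := D.bh.s_comp F A hF2
    have rgtC : D.bh.e (D.bh.comp F A) = D.bh.e A := D.bh.e_comp F A hF2
    cases ε with
    | true =>
      refine ⟨[(D.bh.comp F A, true), (F, false)], by simp [sbrktWord, brktWord], ?_, ?_⟩
      · intro b hb
        simp only [List.mem_cons, List.not_mem_nil, or_false] at hb
        rcases hb with rfl | rfl
        · show D.ver.s (D.bh.s (D.bh.comp F A)) = _
          simp only [lsrc]; rw [lftC, baseF]
        · show D.ver.s (D.bh.s F) = _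
          simp only [lsrc]; rw [baseF]
      · simp only [sbrktWord, brktWord, linv, List.map_cons, List.map_nil, List.reverse_cons, List.reverse_nil, List.nil_append, List.cons_append, List.append_nil, List.flatMap_cons, List.flatMap_nil, List.singleton_append, List.append_assoc, if_true, Bool.false_eq_true, if_false]
        rw [topC, botC, lftC, rgtC, hF1, hF2]
        simp only [D.ver.inv_inv, D.hor.inv_inv]

        have s1 : Relation.EqvGen (Red D.ver D.hor) (.inr [.inr x, .inr (D.bv.s A), .inl (D.bh.e A), .inr (D.hor.inv (D.bv.e A)), .inl (D.ver.inv (D.bh.s A)), .inr (D.hor.inv x)]) (.inr [.inr (D.hor.comp x (D.bv.s A)), .inl (D.bh.e A), .inr (D.hor.inv (D.bv.e A)), .inl (D.ver.inv (D.bh.s A)), .inr (D.hor.inv x)]) :=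
          eqv_merge_h [] [.inl (D.bh.e A), .inr (D.hor.inv (D.bv.e A)), .inl (D.ver.inv (D.bh.s A)), .inr (D.hor.inv x)] x (D.bv.s A) (D.hor.comp x (D.bv.s A)) cxA rfl
        have s2 : Relation.EqvGen (Red D.ver D.hor) (.inr [.inr (D.hor.comp x (D.bv.s A)), .inl (D.bh.e A), .inr (D.hor.inv (D.hor.comp (D.bv.e F) (D.bv.e A))), .inl (D.ver.inv (D.bh.s F)), .inl (D.bh.s F), .inr (D.bv.e F), .inl (D.ver.inv (D.bh.s A)), .inr (D.hor.inv x)]) (.inr [.inr (D.hor.comp x (D.bv.s A)), .inl (D.bh.e A), .inr (D.hor.inv (D.hor.comp (D.bv.e F) (D.bv.e A))), .inl (D.ver.id (D.ver.e (D.bh.s F))), .inr (D.bv.e F), .inl (D.ver.inv (D.bh.s A)), .inr (D.hor.inv x)]) :=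
          eqv_merge_v [.inr (D.hor.comp x (D.bv.s A)), .inl (D.bh.e A), .inr (D.hor.inv (D.hor.comp (D.bv.e F) (D.bv.e A)))] [.inr (D.bv.e F), .inl (D.ver.inv (D.bh.s A)), .inr (D.hor.inv x)] (D.ver.inv (D.bh.s F)) (D.bh.s F) (D.ver.id (D.ver.e (D.bh.s F))) (D.ver.e_inv (D.bh.s F)) (D.ver.inv_comp (D.bh.s F))
        have s3 : Relation.EqvGen (Red D.ver D.hor) (.inr [.inr (D.hor.comp x (D.bv.s A)), .inl (D.bh.e A), .inr (D.hor.inv (D.hor.comp (D.bv.e F) (D.bv.e A))), .inl (D.ver.id (D.ver.e (D.bh.s F))), .inr (D.bv.e F), .inl (D.ver.inv (D.bh.s A)), .inr (D.hor.inv x)]) (.inr [.inr (D.hor.comp x (D.bv.s A)), .inl (D.bh.e A), .inr (D.hor.inv (D.hor.comp (D.bv.e F) (D.bv.e A))), .inr (D.bv.e F), .inl (D.ver.inv (D.bh.s A)), .inr (D.hor.inv x)]) :=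
          eqv_remove [.inr (D.hor.comp x (D.bv.s A)), .inl (D.bh.e A), .inr (D.hor.inv (D.hor.comp (D.bv.e F) (D.bv.e A)))] [.inr (D.bv.e F), .inl (D.ver.inv (D.bh.s A)), .inr (D.hor.inv x)] (.inl (D.ver.id (D.ver.e (D.bh.s F)))) ⟨_, rfl⟩ (by simp)
        have s4 : Relation.EqvGen (Red D.ver D.hor) (.inr [.inr (D.hor.comp x (D.bv.s A)), .inl (D.bh.e A), .inr (D.hor.inv (D.hor.comp (D.bv.e F) (D.bv.e A))), .inr (D.bv.e F), .inl (D.ver.inv (D.bh.s A)), .inr (D.hor.inv x)]) (.inr [.inr (D.hor.comp x (D.bv.s A)), .inl (D.bh.e A), .inr (D.hor.inv (D.bv.e A)), .inl (D.ver.inv (D.bh.s A)), .inr (D.hor.inv x)]) :=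
          eqv_merge_h [.inr (D.hor.comp x (D.bv.s A)), .inl (D.bh.e A)] [.inl (D.ver.inv (D.bh.s A)), .inr (D.hor.inv x)] (D.hor.inv (D.hor.comp (D.bv.e F) (D.bv.e A))) (D.bv.e F) (D.hor.inv (D.bv.e A)) (by rw [D.hor.e_inv, D.hor.s_comp _ _ cyF]) (D.hor.inv_comp_cancel cyF)
        exact Relation.EqvGen.trans _ _ _ s1 (Relation.EqvGen.symm _ _
          (Relation.EqvGen.trans _ _ _ s2 (Relation.EqvGen.trans _ _ _ s3 s4)))

    | false =>
      refine ⟨[(F, true), (D.bh.comp F A, false)], by simp [sbrktWord, brktWord], ?_, ?_⟩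
      · intro b hb
        simp only [List.mem_cons, List.not_mem_nil, or_false] at hb
        rcases hb with rfl | rfl
        · show D.ver.s (D.bh.s F) = _
          simp only [lsrc]; rw [baseF]
        · show D.ver.s (D.bh.s (D.bh.comp F A)) = _
          simp only [lsrc]; rw [lftC, baseF]
      · simp only [sbrktWord, brktWord, linv, List.map_cons, List.map_nil, List.reverse_cons, List.reverse_nil, List.nil_append, List.cons_append, List.append_nil, List.flatMap_cons, List.flatMap_nil, List.singleton_append, List.append_assoc, if_true, Bool.false_eq_true, if_false]
        rw [topC, botC, lftC, rgtC, hF1, hF2]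
        simp only [D.ver.inv_inv, D.hor.inv_inv]

        have s1 : Relation.EqvGen (Red D.ver D.hor) (.inr [.inr x, .inl (D.bh.s A), .inr (D.bv.e A), .inl (D.ver.inv (D.bh.e A)), .inr (D.hor.inv (D.bv.s A)), .inr (D.hor.inv x)]) (.inr [.inr x, .inl (D.bh.s A), .inr (D.bv.e A), .inl (D.ver.inv (D.bh.e A)), .inr (D.hor.inv (D.hor.comp x (D.bv.s A)))]) :=
          eqv_merge_h [.inr x, .inl (D.bh.s A), .inr (D.bv.e A), .inl (D.ver.inv (D.bh.e A))] [] (D.hor.inv (D.bv.s A)) (D.hor.inv x) (D.hor.inv (D.hor.comp x (D.bv.s A))) (by rw [D.hor.e_inv, D.hor.s_inv]; exact cxA.symm) (D.hor.inv_comp_eq cxA).symm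
        have s2 : Relation.EqvGen (Red D.ver D.hor) (.inr [.inr x, .inl (D.bh.s A), .inr (D.hor.inv (D.bv.e F)), .inl (D.ver.inv (D.bh.s F)), .inl (D.bh.s F), .inr (D.hor.comp (D.bv.e F) (D.bv.e A)), .inl (D.ver.inv (D.bh.e A)), .inr (D.hor.inv (D.hor.comp x (D.bv.s A)))]) (.inr [.inr x, .inl (D.bh.s A), .inr (D.hor.inv (D.bv.e F)), .inl (D.ver.id (D.ver.e (D.bh.s F))), .inr (D.hor.comp (D.bv.e F) (D.bv.e A)), .inl (D.ver.inv (D.bh.e A)), .inr (D.hor.inv (D.hor.comp x (D.bv.s A)))]) :=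
          eqv_merge_v [.inr x, .inl (D.bh.s A), .inr (D.hor.inv (D.bv.e F))] [.inr (D.hor.comp (D.bv.e F) (D.bv.e A)), .inl (D.ver.inv (D.bh.e A)), .inr (D.hor.inv (D.hor.comp x (D.bv.s A)))] (D.ver.inv (D.bh.s F)) (D.bh.s F) (D.ver.id (D.ver.e (D.bh.s F))) (D.ver.e_inv (D.bh.s F)) (D.ver.inv_comp (D.bh.s F))
        have s3 : Relation.EqvGen (Red D.ver D.hor) (.inr [.inr x, .inl (D.bh.s A), .inr (D.hor.inv (D.bv.e F)), .inl (D.ver.id (D.ver.e (D.bh.s F))), .inr (D.hor.comp (D.bv.e F) (D.bv.e A)), .inl (D.ver.inv (D.bh.e A)), .inr (D.hor.inv (D.hor.comp x (D.bv.s A)))]) (.inr [.inr x, .inl (D.bh.s A), .inr (D.hor.inv (D.bv.e F)), .inr (D.hor.comp (D.bv.e F) (D.bv.e A)), .inl (D.ver.inv (D.bh.e A)), .inr (D.hor.inv (D.hor.comp x (D.bv.s A)))]) :=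
          eqv_remove [.inr x, .inl (D.bh.s A), .inr (D.hor.inv (D.bv.e F))] [.inr (D.hor.comp (D.bv.e F) (D.bv.e A)), .inl (D.ver.inv (D.bh.e A)), .inr (D.hor.inv (D.hor.comp x (D.bv.s A)))] (.inl (D.ver.id (D.ver.e (D.bh.s F)))) ⟨_, rfl⟩ (by simp)
        have s4 : Relation.EqvGen (Red D.ver D.hor) (.inr [.inr x, .inl (D.bh.s A), .inr (D.hor.inv (D.bv.e F)), .inr (D.hor.comp (D.bv.e F) (D.bv.e A)), .inl (D.ver.inv (D.bh.e A)), .inr (D.hor.inv (D.hor.comp x (D.bv.s A)))]) (.inr [.inr x, .inl (D.bh.s A), .inr (D.bv.e A), .inl (D.ver.inv (D.bh.e A)), .inr (D.hor.inv (D.hor.comp x (D.bv.s A)))]) :=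
          eqv_merge_h [.inr x, .inl (D.bh.s A)] [.inl (D.ver.inv (D.bh.e A)), .inr (D.hor.inv (D.hor.comp x (D.bv.s A)))] (D.hor.inv (D.bv.e F)) (D.hor.comp (D.bv.e F) (D.bv.e A)) (D.bv.e A) (by rw [D.hor.e_inv, D.hor.s_comp _ _ cyF]) (D.hor.inv_cancel_left cyF)
        exact Relation.EqvGen.trans _ _ _ s1 (Relation.EqvGen.symm _ _
          (Relation.EqvGen.trans _ _ _ s2 (Relation.EqvGen.trans _ _ _ s3 s4)))

  | inl f =>
    simp only [ltgt] at hz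
    obtain ⟨G, hG1, hG2⟩ := hfill (D.hor.inv (D.bv.s A)) (D.ver.inv f)
      (by rw [D.hor.e_inv, D.ver.s_inv, D.match_tl, ← hz])
    obtain ⟨F, botF, lftF⟩ : ∃ F, D.bv.e F = D.bv.s A ∧ D.bh.s F = f :=
      ⟨D.bh.inv (D.bv.inv G),
        by rw [D.bve_bhinv, D.bv.e_inv, hG1, D.hor.inv_inv],
        by rw [D.bh.s_inv, D.bhe_bvinv, hG2, D.ver.inv_inv]⟩
    have cgF : D.ver.e (D.bh.e F) = D.ver.s (D.bh.e A) := by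
      rw [← D.match_br, botF, D.match_tr]
    have topC : D.bv.s (D.bv.comp F A) = D.bv.s F := D.bv.s_comp F A botF
    have botC : D.bv.e (D.bv.comp F A) = D.bv.e A := D.bv.e_comp F A botF
    have lftC : D.bh.s (D.bv.comp F A) = D.ver.comp f (D.bh.s A) := by
      rw [D.l_vcomp F A botF, lftF]
    have rgtC : D.bh.e (D.bv.comp F A) = D.ver.comp (D.bh.e F) (D.bh.e A) :=
      D.r_vcomp F A botF
    cases ε with
    | true =>
      refine ⟨[(F, false), (D.bv.comp F A, true)], by simp [sbrktWord, brktWord], ?_, ?_⟩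
      · intro b hb
        simp only [List.mem_cons, List.not_mem_nil, or_false] at hb
        rcases hb with rfl | rfl
        · show D.ver.s (D.bh.s F) = _
          simp only [lsrc]; rw [lftF]
        · show D.ver.s (D.bh.s (D.bv.comp F A)) = _
          simp only [lsrc]; rw [lftC, D.ver.s_comp _ _ hz]
      · simp only [sbrktWord, brktWord, linv, List.map_cons, List.map_nil, List.reverse_cons, List.reverse_nil, List.nil_append, List.cons_append, List.append_nil, List.flatMap_cons, List.flatMap_nil, List.singleton_append, List.append_assoc, if_true, Bool.false_eq_true, if_false]
        rw [topC, botC, lftC, rgtC, botF, lftF]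
        simp only [D.ver.inv_inv, D.hor.inv_inv]

        have s1 : Relation.EqvGen (Red D.ver D.hor) (.inr [.inl f, .inr (D.bv.s A), .inl (D.bh.e A), .inr (D.hor.inv (D.bv.e A)), .inl (D.ver.inv (D.bh.s A)), .inl (D.ver.inv f)]) (.inr [.inl f, .inr (D.bv.s A), .inl (D.bh.e A), .inr (D.hor.inv (D.bv.e A)), .inl (D.ver.inv (D.ver.comp f (D.bh.s A)))]) :=
          eqv_merge_v [.inl f, .inr (D.bv.s A), .inl (D.bh.e A), .inr (D.hor.inv (D.bv.e A))] [] (D.ver.inv (D.bh.s A)) (D.ver.inv f) (D.ver.inv (D.ver.comp f (D.bh.s A))) (by rw [D.ver.e_inv, D.ver.s_inv]; exact hz.symm) (D.ver.inv_comp_eq hz).symm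
        have s2 : Relation.EqvGen (Red D.ver D.hor) (.inr [.inl f, .inr (D.bv.s A), .inl (D.ver.inv (D.bh.e F)), .inr (D.hor.inv (D.bv.s F)), .inr (D.bv.s F), .inl (D.ver.comp (D.bh.e F) (D.bh.e A)), .inr (D.hor.inv (D.bv.e A)), .inl (D.ver.inv (D.ver.comp f (D.bh.s A)))]) (.inr [.inl f, .inr (D.bv.s A), .inl (D.ver.inv (D.bh.e F)), .inr (D.hor.id (D.hor.e (D.bv.s F))), .inl (D.ver.comp (D.bh.e F) (D.bh.e A)), .inr (D.hor.inv (D.bv.e A)), .inl (D.ver.inv (D.ver.comp f (D.bh.s A)))]) :=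
          eqv_merge_h [.inl f, .inr (D.bv.s A), .inl (D.ver.inv (D.bh.e F))] [.inl (D.ver.comp (D.bh.e F) (D.bh.e A)), .inr (D.hor.inv (D.bv.e A)), .inl (D.ver.inv (D.ver.comp f (D.bh.s A)))] (D.hor.inv (D.bv.s F)) (D.bv.s F) (D.hor.id (D.hor.e (D.bv.s F))) (D.hor.e_inv (D.bv.s F)) (D.hor.inv_comp (D.bv.s F))
        have s3 : Relation.EqvGen (Red D.ver D.hor) (.inr [.inl f, .inr (D.bv.s A), .inl (D.ver.inv (D.bh.e F)), .inr (D.hor.id (D.hor.e (D.bv.s F))), .inl (D.ver.comp (D.bh.e F) (D.bh.e A)), .inr (D.hor.inv (D.bv.e A)), .inl (D.ver.inv (D.ver.comp f (D.bh.s A)))]) (.inr [.inl f, .inr (D.bv.s A), .inl (D.ver.inv (D.bh.e F)), .inl (D.ver.comp (D.bh.e F) (D.bh.e A)), .inr (D.hor.inv (D.bv.e A)), .inl (D.ver.inv (D.ver.comp f (D.bh.s A)))]) :=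
          eqv_remove [.inl f, .inr (D.bv.s A), .inl (D.ver.inv (D.bh.e F))] [.inl (D.ver.comp (D.bh.e F) (D.bh.e A)), .inr (D.hor.inv (D.bv.e A)), .inl (D.ver.inv (D.ver.comp f (D.bh.s A)))] (.inr (D.hor.id (D.hor.e (D.bv.s F)))) ⟨_, rfl⟩ (by simp)
        have s4 : Relation.EqvGen (Red D.ver D.hor) (.inr [.inl f, .inr (D.bv.s A), .inl (D.ver.inv (D.bh.e F)), .inl (D.ver.comp (D.bh.e F) (D.bh.e A)), .inr (D.hor.inv (D.bv.e A)), .inl (D.ver.inv (D.ver.comp f (D.bh.s A)))]) (.inr [.inl f, .inr (D.bv.s A), .inl (D.bh.e A), .inr (D.hor.inv (D.bv.e A)), .inl (D.ver.inv (D.ver.comp f (D.bh.s A)))]) :=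
          eqv_merge_v [.inl f, .inr (D.bv.s A)] [.inr (D.hor.inv (D.bv.e A)), .inl (D.ver.inv (D.ver.comp f (D.bh.s A)))] (D.ver.inv (D.bh.e F)) (D.ver.comp (D.bh.e F) (D.bh.e A)) (D.bh.e A) (by rw [D.ver.e_inv, D.ver.s_comp _ _ cgF]) (D.ver.inv_cancel_left cgF)
        exact Relation.EqvGen.trans _ _ _ s1 (Relation.EqvGen.symm _ _
          (Relation.EqvGen.trans _ _ _ s2 (Relation.EqvGen.trans _ _ _ s3 s4)))

    | false =>
      refine ⟨[(D.bv.comp F A, false), (F, true)], by simp [sbrktWord, brktWord], ?_, ?_⟩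
      · intro b hb
        simp only [List.mem_cons, List.not_mem_nil, or_false] at hb
        rcases hb with rfl | rfl
        · show D.ver.s (D.bh.s (D.bv.comp F A)) = _
          simp only [lsrc]; rw [lftC, D.ver.s_comp _ _ hz]
        · show D.ver.s (D.bh.s F) = _
          simp only [lsrc]; rw [lftF]
      · simp only [sbrktWord, brktWord, linv, List.map_cons, List.map_nil, List.reverse_cons, List.reverse_nil, List.nil_append, List.cons_append, List.append_nil, List.flatMap_cons, List.flatMap_nil, List.singleton_append, List.append_assoc, if_true, Bool.false_eq_true, if_false]
        rw [topC, botC, lftC, rgtC, botF, lftF]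
        simp only [D.ver.inv_inv, D.hor.inv_inv]

        have s1 : Relation.EqvGen (Red D.ver D.hor) (.inr [.inl f, .inl (D.bh.s A), .inr (D.bv.e A), .inl (D.ver.inv (D.bh.e A)), .inr (D.hor.inv (D.bv.s A)), .inl (D.ver.inv f)]) (.inr [.inl (D.ver.comp f (D.bh.s A)), .inr (D.bv.e A), .inl (D.ver.inv (D.bh.e A)), .inr (D.hor.inv (D.bv.s A)), .inl (D.ver.inv f)]) :=
          eqv_merge_v [] [.inr (D.bv.e A), .inl (D.ver.inv (D.bh.e A)), .inr (D.hor.inv (D.bv.s A)), .inl (D.ver.inv f)] f (D.bh.s A) (D.ver.comp f (D.bh.s A)) hz rfl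
        have s2 : Relation.EqvGen (Red D.ver D.hor) (.inr [.inl (D.ver.comp f (D.bh.s A)), .inr (D.bv.e A), .inl (D.ver.inv (D.ver.comp (D.bh.e F) (D.bh.e A))), .inr (D.hor.inv (D.bv.s F)), .inr (D.bv.s F), .inl (D.bh.e F), .inr (D.hor.inv (D.bv.s A)), .inl (D.ver.inv f)]) (.inr [.inl (D.ver.comp f (D.bh.s A)), .inr (D.bv.e A), .inl (D.ver.inv (D.ver.comp (D.bh.e F) (D.bh.e A))), .inr (D.hor.id (D.hor.e (D.bv.s F))), .inl (D.bh.e F), .inr (D.hor.inv (D.bv.s A)), .inl (D.ver.inv f)]) :=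
          eqv_merge_h [.inl (D.ver.comp f (D.bh.s A)), .inr (D.bv.e A), .inl (D.ver.inv (D.ver.comp (D.bh.e F) (D.bh.e A)))] [.inl (D.bh.e F), .inr (D.hor.inv (D.bv.s A)), .inl (D.ver.inv f)] (D.hor.inv (D.bv.s F)) (D.bv.s F) (D.hor.id (D.hor.e (D.bv.s F))) (D.hor.e_inv (D.bv.s F)) (D.hor.inv_comp (D.bv.s F))
        have s3 : Relation.EqvGen (Red D.ver D.hor) (.inr [.inl (D.ver.comp f (D.bh.s A)), .inr (D.bv.e A), .inl (D.ver.inv (D.ver.comp (D.bh.e F) (D.bh.e A))), .inr (D.hor.id (D.hor.e (D.bv.s F))), .inl (D.bh.e F), .inr (D.hor.inv (D.bv.s A)), .inl (D.ver.inv f)]) (.inr [.inl (D.ver.comp f (D.bh.s A)), .inr (D.bv.e A), .inl (D.ver.inv (D.ver.comp (D.bh.e F) (D.bh.e A))), .inl (D.bh.e F), .inr (D.hor.inv (D.bv.s A)), .inl (D.ver.inv f)]) :=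
          eqv_remove [.inl (D.ver.comp f (D.bh.s A)), .inr (D.bv.e A), .inl (D.ver.inv (D.ver.comp (D.bh.e F) (D.bh.e A)))] [.inl (D.bh.e F), .inr (D.hor.inv (D.bv.s A)), .inl (D.ver.inv f)] (.inr (D.hor.id (D.hor.e (D.bv.s F)))) ⟨_, rfl⟩ (by simp)
        have s4 : Relation.EqvGen (Red D.ver D.hor) (.inr [.inl (D.ver.comp f (D.bh.s A)), .inr (D.bv.e A), .inl (D.ver.inv (D.ver.comp (D.bh.e F) (D.bh.e A))), .inl (D.bh.e F), .inr (D.hor.inv (D.bv.s A)), .inl (D.ver.inv f)]) (.inr [.inl (D.ver.comp f (D.bh.s A)), .inr (D.bv.e A), .inl (D.ver.inv (D.bh.e A)), .inr (D.hor.inv (D.bv.s A)), .inl (D.ver.inv f)]) :=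
          eqv_merge_v [.inl (D.ver.comp f (D.bh.s A)), .inr (D.bv.e A)] [.inr (D.hor.inv (D.bv.s A)), .inl (D.ver.inv f)] (D.ver.inv (D.ver.comp (D.bh.e F) (D.bh.e A))) (D.bh.e F) (D.ver.inv (D.bh.e A)) (by rw [D.ver.e_inv, D.ver.s_comp _ _ cgF]) (D.ver.inv_comp_cancel cgF)
        exact Relation.EqvGen.trans _ _ _ s1 (Relation.EqvGen.symm _ _
          (Relation.EqvGen.trans _ _ _ s2 (Relation.EqvGen.trans _ _ _ s3 s4)))

theorem eqv_insert_invpair {Pt Av Ah : Type} {GV : PreGroupoid Pt Av}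
    {GH : PreGroupoid Pt Ah} (z : Letter Av Ah) (l₁ l₂ : List (Letter Av Ah))
    (hne : l₁ ++ l₂ ≠ []) :
    Relation.EqvGen (Red GV GH) (.inr (l₁ ++ l₂))
      (.inr (l₁ ++ linv GV GH z :: z :: l₂)) := by
  refine Relation.EqvGen.symm _ _ ?_
  cases z with
  | inl f =>
    simp only [linv]
    refine Relation.EqvGen.trans _ (.inr (l₁ ++ .inl (GV.id (GV.e f)) :: l₂)) _
      (eqv_merge_v l₁ l₂ (GV.inv f) f (GV.id (GV.e f)) (GV.e_inv f) (GV.inv_comp f))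
      (eqv_remove l₁ l₂ (.inl (GV.id (GV.e f))) ⟨_, rfl⟩ hne)
  | inr x =>
    simp only [linv]
    refine Relation.EqvGen.trans _ (.inr (l₁ ++ .inr (GH.id (GH.e x)) :: l₂)) _
      (eqv_merge_h l₁ l₂ (GH.inv x) x (GH.id (GH.e x)) (GH.e_inv x) (GH.inv_comp x))
      (eqv_remove l₁ l₂ (.inr (GH.id (GH.e x))) ⟨_, rfl⟩ hne)

theorem conj_flat {Pt Bx Hh Vv : Type} (D : DoubleGroupoid Pt Bx Hh Vv)
    (hfill : ∀ (x : Hh) (g : Vv), D.hor.e x = D.ver.s g →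
      ∃ A : Bx, D.bv.s A = x ∧ D.bh.e A = g)
    (z : Letter Vv Hh) :
    ∀ L : List (Bx × Bool), (∀ b ∈ L, D.ver.s (D.bh.s b.1) = ltgt D.ver D.hor z) →
    ∃ L' : List (Bx × Bool),
      (∀ b ∈ L', D.ver.s (D.bh.s b.1) = lsrc D.ver D.hor z) ∧
      Relation.EqvGen (Red D.ver D.hor)
        (.inr (z :: L.flatMap (sbrktWord D) ++ [linv D.ver D.hor z]))
        (mkW (lsrc D.ver D.hor z) (L'.flatMap (sbrktWord D))) := by
  intro L
  induction L with
  | nil =>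
    intro _
    refine ⟨[], by simp, ?_⟩
    cases z with
    | inl f =>
      simp only [List.flatMap_nil, List.nil_append, List.singleton_append, mkW, linv, lsrc]
      have m1 : Relation.EqvGen (Red D.ver D.hor)
          (.inr [Sum.inl f, Sum.inl (D.ver.inv f)])
          (.inr [Sum.inl (D.ver.id (D.ver.s f))]) :=
        eqv_merge_v [] [] f (D.ver.inv f) (D.ver.id (D.ver.s f))
          (D.ver.s_inv f).symm (D.ver.comp_inv f)
      have m2 : Relation.EqvGen (Red D.ver D.hor)
          (.inr [Sum.inl (D.ver.id (D.ver.s f))]) (.inl (D.ver.s f)) :=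
        Relation.EqvGen.rel _ _
          (Red.single_id (.inl (D.ver.id (D.ver.s f))) (D.ver.s f) ⟨_, rfl⟩
            (D.ver.s_id (D.ver.s f)))
      exact Relation.EqvGen.trans _ _ _ m1 m2
    | inr x =>
      simp only [List.flatMap_nil, List.nil_append, List.singleton_append, mkW, linv, lsrc]
      have m1 : Relation.EqvGen (Red D.ver D.hor)
          (.inr [Sum.inr x, Sum.inr (D.hor.inv x)])
          (.inr [Sum.inr (D.hor.id (D.hor.s x))]) :=
        eqv_merge_h [] [] x (D.hor.inv x) (D.hor.id (D.hor.s x))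
          (D.hor.s_inv x).symm (D.hor.comp_inv x)
      have m2 : Relation.EqvGen (Red D.ver D.hor)
          (.inr [Sum.inr (D.hor.id (D.hor.s x))]) (.inl (D.hor.s x)) :=
        Relation.EqvGen.rel _ _
          (Red.single_id (.inr (D.hor.id (D.hor.s x))) (D.hor.s x) ⟨_, rfl⟩
            (D.hor.s_id (D.hor.s x)))
      exact Relation.EqvGen.trans _ _ _ m1 m2
  | cons zb L ih =>
    intro hbase
    obtain ⟨L₁, hne1, hmem1, h1⟩ := conj_single D hfill zb.1 zb.2 z
      (hbase zb List.mem_cons_self).symm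
    obtain ⟨L₂, hmem2, h2⟩ := ih (fun b hb => hbase b (List.mem_cons_of_mem _ hb))
    refine ⟨L₁ ++ L₂, ?_, ?_⟩
    · intro b hb
      rcases List.mem_append.mp hb with hb | hb
      exacts [hmem1 b hb, hmem2 b hb]
    · have e3 := eqv_append (GV := D.ver) (GH := D.hor)
        (p := lsrc D.ver D.hor z)
        (a := z :: sbrktWord D zb ++ [linv D.ver D.hor z])
        (b := z :: L.flatMap (sbrktWord D) ++ [linv D.ver D.hor z])
        (L₂.flatMap (sbrktWord D)) (by simp) hne1 h1 h2
      have e0 : Relation.EqvGen (Red D.ver D.hor)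
          (.inr ((z :: sbrktWord D zb) ++ (L.flatMap (sbrktWord D) ++ [linv D.ver D.hor z])))
          (.inr ((z :: sbrktWord D zb) ++ linv D.ver D.hor z :: z ::
            (L.flatMap (sbrktWord D) ++ [linv D.ver D.hor z]))) :=
        eqv_insert_invpair z _ _ (by simp)
      simp only [List.cons_append, List.append_assoc, List.singleton_append] at e0 e3 ⊢
      simp only [List.flatMap_cons, List.flatMap_append, List.append_assoc] at e3 ⊢
      exact Relation.EqvGen.trans _ _ _ e0 e3
/-- Let `B` be a slim double groupoid satisfying the filling condition, and `J` the
subgroupoid of the free product `V * H` generated by the bracket elements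
`[A] = x g y⁻¹ h⁻¹` of the boxes of `B`.  Then `J` is a *normal* subgroup bundle:
for every box `A` and every arrow `u` of `V * H` (given as a composable word in
the letters of `V ⊔ H`) whose target is the base point of the loop `[A]`, the
conjugate `u [A] u⁻¹` lies in `J`. -/
theorem bracket_subgroupoid_normal (D : DoubleGroupoid Pt Bx Hh Vv)
    (hslim : ∀ A A' : Bx, D.bv.s A = D.bv.s A' → D.bv.e A = D.bv.e A' →
      D.bh.s A = D.bh.s A' → D.bh.e A = D.bh.e A' → A = A')
    (hfill : ∀ (x : Hh) (g : Vv), D.hor.e x = D.ver.s g →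
      ∃ A : Bx, D.bv.s A = x ∧ D.bh.e A = g) :
    ∀ (A : Bx) (u : List (Letter Vv Hh)), Composable D.ver D.hor u →
      (∀ z ∈ u.getLast?, ltgt D.ver D.hor z = D.ver.s (D.bh.s A)) →
      InJ D ((u.head?.map (lsrc D.ver D.hor)).getD (D.ver.s (D.bh.s A)))
        (.inr (u ++ brktWord D A ++ (u.map (linv D.ver D.hor)).reverse)) := by
  intro A u
  induction u with
  | nil =>
    intro _ _
    refine ⟨[(A, true)], ?_, ?_⟩
    · intro b hb
      simp only [List.mem_cons, List.not_mem_nil, or_false] at hb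
      subst hb
      rfl
    · exact Relation.EqvGen.refl _
  | cons z u ih =>
    intro hcomp hlast
    have hcomp' : Composable D.ver D.hor u := hcomp.tail
    have hlast' : ∀ w ∈ u.getLast?, ltgt D.ver D.hor w = D.ver.s (D.bh.s A) := by
      intro w hw
      apply hlast
      cases u with
      | nil => simp at hw
      | cons b l => simpa [List.getLast?_cons_cons] using hw
    have htgt : ltgt D.ver D.hor z
        = ((u.head?.map (lsrc D.ver D.hor)).getD (D.ver.s (D.bh.s A))) := by
      cases u with
      | nil => exact hlast z (by simp)
      | cons b l =>
        have := hcomp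
        rw [Composable, List.Chain', List.isChain_cons_cons] at this
        simpa using this.1
    obtain ⟨L, hmemL, hL⟩ := ih hcomp' hlast'
    have hmemL' : ∀ b ∈ L, D.ver.s (D.bh.s b.1) = ltgt D.ver D.hor z := by
      intro b hb; rw [htgt]; exact hmemL b hb
    obtain ⟨L', hmem', hL'⟩ := conj_flat D hfill z L hmemL'
    refine ⟨L', fun b hb => hmem' b hb, ?_⟩
    have e1 := eqv_context (GV := D.ver) (GH := D.hor) [z] [linv D.ver D.hor z]
      (by simp) hL
    simp only [toL_inr, toL_mkW] at e1
    have heq : (z :: u) ++ brktWord D A ++ (List.map (linv D.ver D.hor) (z :: u)).reverse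
        = [z] ++ (u ++ brktWord D A ++ (List.map (linv D.ver D.hor) u).reverse)
          ++ [linv D.ver D.hor z] := by
      simp [List.append_assoc]
    rw [heq]
    have e2 : Relation.EqvGen (Red D.ver D.hor)
        (.inr ([z] ++ L.flatMap (sbrktWord D) ++ [linv D.ver D.hor z]))
        (mkW (lsrc D.ver D.hor z) (L'.flatMap (sbrktWord D))) := hL'
    exact Relation.EqvGen.trans _ _ _ e1 e2
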